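/- Let (𝒳,d) be a compact metric space with a finite subset A, let F be a nonempty finite set, ε > 0 and 0 < α ≤ 1/2. Suppose S ⊂ A^F is 2ε-separated with respect to the sup metric d_F((x_g),(y_g)) = max_{g∈F} d(x_g,y_g). Let X = (X_g)_{g∈F} and Y = (Y_g)_{g∈F} be 𝒳^F-valued random variables such that X is uniformly distributed over S and E(#{g ∈ F : d(X_g, Y_g) ≥ ε}) < α|F|. Then I(X;Y) ≥ log|S| − |F|·H(α) − α|F|·log|A|. -/

import Mathlib

open MeasureTheory Filter

noncomputable def miSum {Ω 𝒳 𝒴 : Type*} [MeasurableSpace Ω]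
    (P : Measure Ω) (X : Ω → 𝒳) (Y : Ω → 𝒴) (Pp : Finset (Set 𝒳)) (Qq : Finset (Set 𝒴)) : ℝ :=
  ∑ A ∈ Pp, ∑ B ∈ Qq,
    (P {ω | X ω ∈ A ∧ Y ω ∈ B}).toReal *
      Real.log ((P {ω | X ω ∈ A ∧ Y ω ∈ B}).toReal /
        ((P {ω | X ω ∈ A}).toReal * (P {ω | Y ω ∈ B}).toReal))

/-- A finite measurable partition of a measurable space, given as a finite
collection of measurable, pairwise disjoint sets covering the space. -/
def IsFinPartition {α : Type*} [MeasurableSpace α] (Pp : Finset (Set α)) : Prop :=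
  (∀ A ∈ Pp, MeasurableSet A) ∧
  (∀ A ∈ Pp, ∀ B ∈ Pp, A ≠ B → Disjoint A B) ∧
  (⋃ A ∈ Pp, A) = Set.univ

/-- The mutual information `I(X;Y)`: the supremum over all finite measurable
partitions `Pp` of `𝒳` and `Qq` of `𝒴` of
`∑_{P∈Pp,Q∈Qq} ℙ((X,Y)∈P×Q) log (ℙ((X,Y)∈P×Q) / (ℙ(X∈P)ℙ(Y∈Q)))`. -/
noncomputable def mutualInfo {Ω 𝒳 𝒴 : Type*} [MeasurableSpace Ω] [MeasurableSpace 𝒳]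
    [MeasurableSpace 𝒴] (P : Measure Ω) (X : Ω → 𝒳) (Y : Ω → 𝒴) : ℝ :=
  ⨆ pq : {pq : Finset (Set 𝒳) × Finset (Set 𝒴) // IsFinPartition pq.1 ∧ IsFinPartition pq.2},
    miSum P X Y pq.1.1 pq.1.2

/-- The binary entropy function `H(p) = -p log p - (1-p) log (1-p)`. -/
noncomputable def binEnt (p : ℝ) : ℝ := -(p * Real.log p) - (1 - p) * Real.log (1 - p)

section helpers
open Finset

/-- Gibbs inequality, termwise form. -/
lemma gibbs_sum {β : Type*} (t : Finset β) (p q : β → ℝ) (hp : ∀ i ∈ t, 0 ≤ p i)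
    (hq : ∀ i ∈ t, 0 ≤ q i) (hpq : ∀ i ∈ t, p i ≠ 0 → 0 < q i) :
    ∑ i ∈ t, (p i - q i) ≤ ∑ i ∈ t, p i * Real.log (p i / q i) := by
  apply Finset.sum_le_sum
  intro i hi
  rcases eq_or_lt_of_le (hp i hi) with h | h
  · simp only [← h, zero_mul, zero_sub, neg_nonpos]
    exact hq i hi
  · have hqi : 0 < q i := hpq i hi (ne_of_gt h)
    have hlog : Real.log (q i / p i) ≤ q i / p i - 1 :=
      Real.log_le_sub_one_of_pos (by positivity)
    have h1 : Real.log (p i / q i) = - Real.log (q i / p i) := by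
      rw [← Real.log_inv, inv_div]
    have h2 : p i * Real.log (q i / p i) ≤ p i * (q i / p i - 1) :=
      mul_le_mul_of_nonneg_left hlog h.le
    have h3 : p i * (q i / p i - 1) = q i - p i := by field_simp
    rw [h1]
    nlinarith
/-- Entropy is at most log of the number of atoms. -/
lemma entropy_le_log_card {β : Type*} (t : Finset β) (p : β → ℝ) (hp : ∀ i ∈ t, 0 ≤ p i)
    (hsum : ∑ i ∈ t, p i = 1) :
    ∑ i ∈ t, -(p i * Real.log (p i)) ≤ Real.log t.card := by
  have ht : t.Nonempty := by
    by_contra h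
    rw [Finset.not_nonempty_iff_eq_empty] at h
    simp [h] at hsum
  have htc : (0:ℝ) < t.card := by exact_mod_cast Finset.card_pos.2 ht
  have key := gibbs_sum t p (fun _ => 1 / t.card) hp (fun i _ => by positivity)
    (fun i _ _ => by positivity)
  have h1 : ∑ i ∈ t, (p i - 1 / t.card) = 0 := by
    rw [Finset.sum_sub_distrib, hsum, Finset.sum_const, nsmul_eq_mul]
    field_simp
    norm_num
  have h2 : ∀ i ∈ t, p i * Real.log (p i / (1 / t.card)) =
      p i * Real.log (p i) + p i * Real.log t.card := by
    intro i hi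
    rcases eq_or_lt_of_le (hp i hi) with h | h
    · simp [← h]
    · rw [div_div_eq_mul_div, div_one, Real.log_mul (ne_of_gt h) (ne_of_gt htc), mul_add]
  rw [Finset.sum_congr rfl h2, Finset.sum_add_distrib, ← Finset.sum_mul, hsum, one_mul, h1] at key
  have : ∑ i ∈ t, -(p i * Real.log (p i)) = -∑ i ∈ t, p i * Real.log (p i) := by
    rw [Finset.sum_neg_distrib]
  rw [this]
  linarith

/-- Sums over the (deduplicated) finset of fibers equal sums over the index type,
provided the summand vanishes on the empty set. -/
lemma sum_image_fibers {Y γ : Type*} [Fintype γ] [DecidableEq (Set Y)] (φ : Y → γ)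
    (f : Set Y → ℝ) (hf : f ∅ = 0) :
    ∑ B ∈ Finset.image (fun c => φ ⁻¹' {c}) Finset.univ, f B = ∑ c : γ, f (φ ⁻¹' {c}) := by
  have hL : ∑ B ∈ (Finset.image (fun c => φ ⁻¹' {c}) Finset.univ).filter (· ≠ ∅), f B
      = ∑ B ∈ Finset.image (fun c => φ ⁻¹' {c}) Finset.univ, f B :=
    Finset.sum_filter_of_ne (by intro x _ hx; intro he; exact hx (he ▸ hf))
  have hR : ∑ c ∈ Finset.univ.filter (fun c => φ ⁻¹' {c} ≠ ∅), f (φ ⁻¹' {c})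
      = ∑ c : γ, f (φ ⁻¹' {c}) :=
    Finset.sum_filter_of_ne (by intro x _ hx; intro he; exact hx (he ▸ hf))
  rw [← hL, ← hR]
  rw [Finset.filter_image]
  rw [Finset.sum_image]
  intro c hc c' hc' he
  simp only [Finset.mem_coe, Finset.mem_filter] at hc
  obtain ⟨y, hy⟩ := Set.nonempty_iff_ne_empty.2 hc.2
  have h1 : φ y = c := hy
  have h2 : φ y = c' := by simp only at he; rw [he] at hy; exact hy
  rw [← h1, h2]

/-- Additivity of probability over a finite measurable partition of the target of a
measurable map, intersected with a fixed event. -/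
lemma sum_toReal_partition {Ω α : Type*} [MeasurableSpace Ω] [MeasurableSpace α]
    (P : Measure Ω) [IsProbabilityMeasure P] (Z : Ω → α) (hZ : Measurable Z)
    (Qq : Finset (Set α)) (hQq : IsFinPartition Qq) (E : Set Ω) (hE : MeasurableSet E) :
    ∑ B ∈ Qq, (P (E ∩ Z ⁻¹' B)).toReal = (P E).toReal := by
  have hdisj : (Qq : Set (Set α)).PairwiseDisjoint (fun B => E ∩ Z ⁻¹' B) := by
    intro B hB B' hB' hne
    exact Set.disjoint_of_subset Set.inter_subset_right Set.inter_subset_right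
      ((hQq.2.1 B hB B' hB' hne).preimage Z)
  have hmeas : ∀ B ∈ Qq, MeasurableSet (E ∩ Z ⁻¹' B) := fun B hB =>
    hE.inter (hZ (hQq.1 B hB))
  have hun : (⋃ B ∈ Qq, (E ∩ Z ⁻¹' B)) = E := by
    rw [← Set.inter_iUnion₂]
    have : (⋃ B ∈ Qq, Z ⁻¹' B) = Set.univ := by
      ext ω
      simp only [Set.mem_iUnion, Set.mem_preimage, Set.mem_univ, iff_true]
      have : Z ω ∈ Set.univ := Set.mem_univ _
      rw [← hQq.2.2] at this
      simpa using this
    rw [this, Set.inter_univ]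
  have := measure_biUnion_finset (μ := P) hdisj hmeas
  rw [hun] at this
  rw [this, ENNReal.toReal_sum (fun B _ => measure_ne_top P _)]

/-- miSum is bounded by `log |S|` when `X` takes values in `S`. -/
lemma miSum_le_log {Ω 𝒳 𝒴 : Type*} [MeasurableSpace Ω] [MeasurableSpace 𝒳] [MeasurableSpace 𝒴]
    (P : Measure Ω) [IsProbabilityMeasure P] (X : Ω → 𝒳) (Y : Ω → 𝒴)
    (hX : Measurable X) (hY : Measurable Y) (S : Finset 𝒳) (hS : S.Nonempty) (hXS : ∀ ω, X ω ∈ S)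
    (Pp : Finset (Set 𝒳)) (Qq : Finset (Set 𝒴)) (hPp : IsFinPartition Pp)
    (hQq : IsFinPartition Qq) :
    miSum P X Y Pp Qq ≤ Real.log S.card := by
  classical
  haveI : Nonempty 𝒳 := ⟨hS.choose⟩
  set pA : Set 𝒳 → ℝ := fun A => (P {ω | X ω ∈ A}).toReal with hpA
  have hXA : ∀ A : Set 𝒳, {ω | X ω ∈ A} = X ⁻¹' A := fun _ => rfl
  -- termwise bound
  have step1 : miSum P X Y Pp Qq ≤ ∑ A ∈ Pp, pA A * Real.log (1 / pA A) := by
    unfold miSum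
    have hterm : ∀ A ∈ Pp, ∀ B ∈ Qq,
        (P {ω | X ω ∈ A ∧ Y ω ∈ B}).toReal *
          Real.log ((P {ω | X ω ∈ A ∧ Y ω ∈ B}).toReal /
            ((P {ω | X ω ∈ A}).toReal * (P {ω | Y ω ∈ B}).toReal)) ≤
        (P {ω | X ω ∈ A ∧ Y ω ∈ B}).toReal * Real.log (1 / pA A) := by
      intro A hA B hB
      set u := (P {ω | X ω ∈ A ∧ Y ω ∈ B}).toReal with hu
      have hu0 : 0 ≤ u := ENNReal.toReal_nonneg
      rcases eq_or_lt_of_le hu0 with h | h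
      · rw [← h]; simp
      · have hsubA : {ω | X ω ∈ A ∧ Y ω ∈ B} ⊆ {ω | X ω ∈ A} := fun ω hω => hω.1
        have hsubB : {ω | X ω ∈ A ∧ Y ω ∈ B} ⊆ {ω | Y ω ∈ B} := fun ω hω => hω.2
        have hA1 : u ≤ pA A := ENNReal.toReal_mono (measure_ne_top P _) (measure_mono hsubA)
        have hB1 : u ≤ (P {ω | Y ω ∈ B}).toReal :=
          ENNReal.toReal_mono (measure_ne_top P _) (measure_mono hsubB)
        have hA0 : 0 < pA A := lt_of_lt_of_le h hA1
        have hB0 : 0 < (P {ω | Y ω ∈ B}).toReal := lt_of_lt_of_le h hB1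
        apply mul_le_mul_of_nonneg_left _ hu0
        rw [Real.log_div (ne_of_gt h) (by positivity), Real.log_mul (ne_of_gt hA0) (ne_of_gt hB0),
          one_div, Real.log_inv]
        have : Real.log u ≤ Real.log (P {ω | Y ω ∈ B}).toReal := Real.log_le_log h hB1
        linarith
    calc ∑ A ∈ Pp, ∑ B ∈ Qq, _ ≤ ∑ A ∈ Pp, ∑ B ∈ Qq,
          (P {ω | X ω ∈ A ∧ Y ω ∈ B}).toReal * Real.log (1 / pA A) :=
        Finset.sum_le_sum (fun A hA => Finset.sum_le_sum (fun B hB => hterm A hA B hB))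
      _ = ∑ A ∈ Pp, pA A * Real.log (1 / pA A) := by
        apply Finset.sum_congr rfl
        intro A hA
        rw [← Finset.sum_mul]
        congr 1
        have : ∀ B, {ω | X ω ∈ A ∧ Y ω ∈ B} = (X ⁻¹' A) ∩ (Y ⁻¹' B) := fun B => rfl
        calc ∑ B ∈ Qq, (P {ω | X ω ∈ A ∧ Y ω ∈ B}).toReal
            = ∑ B ∈ Qq, (P ((X ⁻¹' A) ∩ Y ⁻¹' B)).toReal := by
              exact Finset.sum_congr rfl (fun B _ => by rw [this B])
          _ = (P (X ⁻¹' A)).toReal :=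
              sum_toReal_partition P Y hY Qq hQq (X ⁻¹' A) (hX (hPp.1 A hA))
          _ = pA A := rfl
  -- now bound the entropy term
  have hsum1 : ∑ A ∈ Pp, pA A = 1 := by
    have : ∑ A ∈ Pp, (P (Set.univ ∩ X ⁻¹' A)).toReal = (P Set.univ).toReal :=
      sum_toReal_partition P X hX Pp hPp Set.univ MeasurableSet.univ
    simp [measure_univ] at this
    exact this
  set t := Pp.filter (fun A => pA A ≠ 0) with ht
  have hsumt : ∑ A ∈ t, pA A = 1 := by
    rw [ht, Finset.sum_filter_of_ne (fun A _ h => h), hsum1]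
  have heq : ∑ A ∈ Pp, pA A * Real.log (1 / pA A) = ∑ A ∈ t, pA A * Real.log (1 / pA A) := by
    rw [ht, Finset.sum_filter_of_ne]
    intro A _ h
    intro he
    exact h (by rw [he, zero_mul])
  -- injection from t into S
  have hcard : t.card ≤ S.card := by
    have hchoice : ∀ A ∈ t, ∃ x, x ∈ A ∧ x ∈ S := by
      intro A hA
      rw [ht, Finset.mem_filter] at hA
      have : {ω | X ω ∈ A} ≠ ∅ := by
        intro he
        exact hA.2 (by rw [hpA]; simp [he])
      obtain ⟨ω, hω⟩ := Set.nonempty_iff_ne_empty.2 this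
      exact ⟨X ω, hω, hXS ω⟩
    choose f hf1 hf2 using hchoice
    apply Finset.card_le_card_of_injOn (fun A => if h : A ∈ t then f A h else Classical.ofNonempty)
    · intro A hA
      rw [Finset.mem_coe] at hA
      simp only [hA, dif_pos]
      exact Finset.mem_coe.1 (hf2 A hA)
    · intro A hA A' hA' he
      simp only [Finset.mem_coe] at hA hA'
      simp only [hA, hA', dif_pos] at he
      by_contra hne
      have hd := hPp.2.1 A (Finset.mem_filter.1 hA).1 A' (Finset.mem_filter.1 hA').1 hne
      exact Set.disjoint_left.1 hd (hf1 A hA) (he ▸ hf1 A' hA')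
  have hent : ∑ A ∈ t, pA A * Real.log (1 / pA A) ≤ Real.log t.card := by
    have : ∀ A ∈ t, pA A * Real.log (1 / pA A) = -(pA A * Real.log (pA A)) := by
      intro A _
      rw [one_div, Real.log_inv, mul_neg]
    rw [Finset.sum_congr rfl this]
    exact entropy_le_log_card t pA (fun A _ => ENNReal.toReal_nonneg) hsumt
  have htS : Real.log t.card ≤ Real.log S.card := by
    have ht0 : 0 < t.card := by
      rcases Nat.eq_zero_or_pos t.card with h | h
      · rw [Finset.card_eq_zero] at h
        rw [h] at hsumt
        simp at hsumt
      · exact h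
    exact Real.log_le_log (by exact_mod_cast ht0) (by exact_mod_cast hcard)
  linarith [step1, heq ▸ hent]

end helpers

set_option maxHeartbeats 1000000 in
/-- Let `A` be a finite subset of a compact metric space `𝒳`, `F` a nonempty finite
index set, and `S ⊆ A^F` a `2ε`-separated set for the sup metric
`d_F((x_g),(y_g)) = max_g d(x_g,y_g)`.  If `X` is uniformly distributed over `S` and
`E(#{g : d(X_g,Y_g) ≥ ε}) < α|F|` with `0 < α ≤ 1/2`, then
`I(X;Y) ≥ log |S| - |F| H(α) - α |F| log |A|`. -/
theorem mutualInfo_ge_of_separated_sup {Ω 𝒳 ι : Type*} [MeasurableSpace Ω]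
    [MetricSpace 𝒳] [CompactSpace 𝒳] [MeasurableSpace 𝒳] [BorelSpace 𝒳]
    [Fintype ι] [Nonempty ι]
    (P : Measure Ω) [IsProbabilityMeasure P] (A : Finset 𝒳) (ε α : ℝ)
    (hε : 0 < ε) (hα0 : 0 < α) (hα : α ≤ 1 / 2)
    (S : Finset (ι → 𝒳)) (hS : S.Nonempty) (hSA : ∀ s ∈ S, ∀ g : ι, s g ∈ A)
    (hsep : ∀ s ∈ S, ∀ t ∈ S, s ≠ t → ∃ g : ι, 2 * ε ≤ dist (s g) (t g))
    (X Y : Ω → ι → 𝒳) (hX : Measurable X) (hY : Measurable Y)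
    (hXS : ∀ ω, X ω ∈ S)
    (hunif : ∀ s ∈ S, (P {ω | X ω = s}).toReal = 1 / S.card)
    (hdist : ∫ ω, (({g : ι | ε ≤ dist (X ω g) (Y ω g)} : Set ι).ncard : ℝ) ∂P <
      α * Fintype.card ι) :
    Real.log S.card - (Fintype.card ι : ℝ) * binEnt α -
      α * (Fintype.card ι : ℝ) * Real.log A.card ≤ mutualInfo P X Y := by
  classical
  set n := Fintype.card ι with hn
  set K : ℝ := (S.card : ℝ) with hKdef
  have hK0 : (0:ℝ) < K := by rw [hKdef]; exact_mod_cast Finset.card_pos.2 hS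
  have ha1 : 1 ≤ A.card := Finset.card_pos.2 ⟨hS.choose (Classical.arbitrary ι),
    hSA _ hS.choose_spec (Classical.arbitrary ι)⟩
  set a : ℝ := (A.card : ℝ) with hadef
  have ha0 : (1:ℝ) ≤ a := by rw [hadef]; exact_mod_cast ha1
  have hα1 : α < 1 := lt_of_le_of_lt hα (by norm_num)
  have h1α : (0:ℝ) < 1 - α := by linarith
  -- the decoder
  set φ : (ι → 𝒳) → ({s // s ∈ S} → ι → Bool) :=
    (fun y s g => decide (ε ≤ dist (s.1 g) (y g))) with hφ
  set fib : ({s // s ∈ S} → ι → Bool) → Set (ι → 𝒳) := fun c => φ ⁻¹' {c} with hfibdef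
  set m : ({s // s ∈ S} → ι → Bool) → {s // s ∈ S} → ℕ :=
    (fun c s => (Finset.univ.filter fun g => c s g = true).card) with hmdef
  have hmn : ∀ c s, m c s ≤ n := fun c s => by
    simpa [hn] using Finset.card_filter_le Finset.univ (fun g => c s g = true)
  set p : (ι → 𝒳) → ({s // s ∈ S} → ι → Bool) → ℝ :=
    (fun s c => (P {ω | X ω = s ∧ Y ω ∈ fib c}).toReal) with hpdef
  set q : ({s // s ∈ S} → ι → Bool) → ℝ := fun c => (P {ω | Y ω ∈ fib c}).toReal with hqdef
  set r : {s // s ∈ S} → ({s // s ∈ S} → ι → Bool) → ℝ :=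
    (fun s c => α ^ (m c s) * (1-α) ^ (n - m c s) * (a ^ (m c s))⁻¹) with hrdef
  have hr0 : ∀ s c, 0 < r s c := fun s c => by
    have : (0:ℝ) < a := by linarith
    positivity
  -- membership in fibers
  have hyfib : ∀ (y : ι → 𝒳) c, y ∈ fib c ↔ φ y = c := fun y c => Iff.rfl
  have hydist : ∀ (y : ι → 𝒳) (c) (_ : y ∈ fib c) (s : {s // s ∈ S}) (g : ι),
      c s g = true ↔ ε ≤ dist (s.1 g) (y g) := by
    intro y c hyc s g
    have h := congrFun (congrFun ((hyfib y c).1 hyc).symm s) g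
    rw [h, hφ]
    simp
  -- measurability
  have hbase : ∀ (z : 𝒳) (g : ι), MeasurableSet {y : ι → 𝒳 | ε ≤ dist z (y g)} := fun z g =>
    measurableSet_le measurable_const
      ((Continuous.dist continuous_const (continuous_apply g)).measurable)
  have hfibmeas : ∀ c, MeasurableSet (fib c) := by
    intro c
    have hfc : fib c = ⋂ s, ⋂ g, {y : ι → 𝒳 | (decide (ε ≤ dist (s.1 g) (y g))) = c s g} := by
      ext y
      constructor
      · intro h
        simp only [Set.mem_iInter, Set.mem_setOf_eq]
        intro s g
        exact congrFun (congrFun ((hyfib y c).1 h) s) g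
      · intro h
        simp only [Set.mem_iInter, Set.mem_setOf_eq] at h
        show φ y = c
        funext s g
        exact h s g
    rw [hfc]
    refine MeasurableSet.iInter fun s => MeasurableSet.iInter fun g => ?_
    rcases Bool.eq_false_or_eq_true (c s g) with h | h
    · rw [h]
      refine MeasurableSet.congr (hbase (s.1 g) g) ?_
      ext y; simp
    · rw [h]
      refine MeasurableSet.congr ((hbase (s.1 g) g).compl) ?_
      ext y; simp
  have hEeq : ∀ (s : ι → 𝒳) c, {ω | X ω = s ∧ Y ω ∈ fib c} = X ⁻¹' {s} ∩ Y ⁻¹' (fib c) := by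
    intro s c; ext ω; simp [Set.mem_preimage]
  have hEmeas : ∀ (s : ι → 𝒳) c, MeasurableSet {ω | X ω = s ∧ Y ω ∈ fib c} := by
    intro s c
    rw [hEeq]
    exact (hX (measurableSet_singleton s)).inter (hY (hfibmeas c))
  -- basic bounds
  have hp0 : ∀ s c, 0 ≤ p s c := fun s c => ENNReal.toReal_nonneg
  have hq0 : ∀ c, 0 ≤ q c := fun c => ENNReal.toReal_nonneg
  have hpq : ∀ s c, p s c ≤ q c := fun s c =>
    ENNReal.toReal_mono (measure_ne_top P _) (measure_mono (fun ω hω => hω.2))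
  -- partitions
  set Pp : Finset (Set (ι → 𝒳)) :=
    insert ((↑S : Set (ι → 𝒳))ᶜ) (S.image fun s => ({s} : Set (ι → 𝒳))) with hPpdef
  set Qq : Finset (Set (ι → 𝒳)) := Finset.image (fun c => fib c) Finset.univ with hQqdef
  have hcompl_notmem : ((↑S : Set (ι → 𝒳))ᶜ) ∉ S.image (fun s => ({s} : Set (ι → 𝒳))) := by
    intro h
    obtain ⟨s, hs, he⟩ := Finset.mem_image.1 h
    have : s ∈ ({s} : Set (ι → 𝒳)) := rfl
    rw [he] at this
    exact this (Finset.mem_coe.2 hs)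
  have hPpPart : IsFinPartition Pp := by
    refine ⟨?_, ?_, ?_⟩
    · intro B hB
      rw [hPpdef, Finset.mem_insert] at hB
      rcases hB with rfl | hB
      · exact (S.finite_toSet.measurableSet).compl
      · obtain ⟨s, _, rfl⟩ := Finset.mem_image.1 hB
        exact measurableSet_singleton s
    · intro B hB B' hB' hne
      rw [hPpdef, Finset.mem_insert] at hB hB'
      rcases hB with rfl | hB <;> rcases hB' with rfl | hB'
      · exact absurd rfl hne
      · obtain ⟨s, hs, rfl⟩ := Finset.mem_image.1 hB'
        exact (Set.disjoint_singleton_right).2 (fun h => h (Finset.mem_coe.2 hs))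
      · obtain ⟨s, hs, rfl⟩ := Finset.mem_image.1 hB
        exact (Set.disjoint_singleton_left).2 (fun h => h (Finset.mem_coe.2 hs))
      · obtain ⟨s, hs, rfl⟩ := Finset.mem_image.1 hB
        obtain ⟨t, ht, rfl⟩ := Finset.mem_image.1 hB'
        exact Set.disjoint_singleton.2 (fun h => hne (by rw [h]))
    · ext x
      simp only [Set.mem_iUnion, Set.mem_univ, iff_true]
      by_cases hx : x ∈ S
      · have h1 : ({x} : Set (ι → 𝒳)) ∈ Pp := by
          rw [hPpdef]
          exact Finset.mem_insert_of_mem (Finset.mem_image.2 ⟨x, hx, rfl⟩)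
        exact ⟨{x}, h1, rfl⟩
      · have h1 : ((↑S : Set (ι → 𝒳))ᶜ) ∈ Pp := by
          rw [hPpdef]; exact Finset.mem_insert_self _ _
        exact ⟨(↑S : Set (ι → 𝒳))ᶜ, h1, fun h => hx (Finset.mem_coe.1 h)⟩
  have hQqPart : IsFinPartition Qq := by
    refine ⟨?_, ?_, ?_⟩
    · intro B hB
      obtain ⟨c, _, rfl⟩ := Finset.mem_image.1 hB
      exact hfibmeas c
    · intro B hB B' hB' hne
      obtain ⟨c, _, rfl⟩ := Finset.mem_image.1 hB
      obtain ⟨c', _, rfl⟩ := Finset.mem_image.1 hB'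
      rw [Set.disjoint_left]
      intro y hy hy'
      exact hne (by rw [← (hyfib y c).1 hy, (hyfib y c').1 hy'])
    · ext y
      simp only [Set.mem_iUnion, Set.mem_univ, iff_true]
      exact ⟨fib (φ y), Finset.mem_image.2 ⟨φ y, Finset.mem_univ _, rfl⟩, rfl⟩
  -- F5 : row sums
  have hF5 : ∀ s ∈ S, ∑ c, p s c = 1 / K := by
    intro s hs
    have h1 : ∑ B ∈ Qq, (P ((X ⁻¹' {s}) ∩ Y ⁻¹' B)).toReal = (P (X ⁻¹' {s})).toReal :=
      sum_toReal_partition P Y hY Qq hQqPart (X ⁻¹' {s}) (hX (measurableSet_singleton s))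
    have h2 : ∑ B ∈ Qq, (P ((X ⁻¹' {s}) ∩ Y ⁻¹' B)).toReal
        = ∑ c, (P ((X ⁻¹' {s}) ∩ Y ⁻¹' (fib c))).toReal := by
      rw [hQqdef]
      exact sum_image_fibers φ (fun B => (P ((X ⁻¹' {s}) ∩ Y ⁻¹' B)).toReal) (by simp)
    have h3 : ∀ c, (P ((X ⁻¹' {s}) ∩ Y ⁻¹' (fib c))).toReal = p s c := by
      intro c; simp only [hpdef]; rw [hEeq s c]
    have h4 : (P (X ⁻¹' {s})).toReal = 1 / K := by
      have : X ⁻¹' {s} = {ω | X ω = s} := by ext ω; simp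
      rw [this, hKdef]
      exact hunif s hs
    rw [← Finset.sum_congr rfl (fun c _ => h3 c), ← h2, h1, h4]
  -- F4 : column sums
  have hF4 : ∀ c, ∑ s ∈ S, p s c = q c := by
    intro c
    have hdisj : (↑S : Set (ι → 𝒳)).PairwiseDisjoint
        (fun s => {ω | X ω = s ∧ Y ω ∈ fib c}) := by
      intro s _ s' _ hne
      rw [Function.onFun, Set.disjoint_left]
      rintro ω ⟨h1, _⟩ ⟨h2, _⟩
      exact hne (h1 ▸ h2)
    have hun : (⋃ s ∈ S, {ω | X ω = s ∧ Y ω ∈ fib c}) = {ω | Y ω ∈ fib c} := by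
      ext ω
      simp only [Set.mem_iUnion, Set.mem_setOf_eq]
      constructor
      · rintro ⟨s, _, _, h⟩; exact h
      · intro h; exact ⟨X ω, hXS ω, rfl, h⟩
    have := measure_biUnion_finset (μ := P) hdisj (fun s _ => hEmeas s c)
    rw [hun] at this
    have h6 := congrArg ENNReal.toReal this
    rw [ENNReal.toReal_sum (fun s _ => measure_ne_top P _)] at h6
    exact h6.symm
  have hsumsum : ∑ s ∈ S, ∑ c, p s c = 1 := by
    rw [Finset.sum_congr rfl hF5, Finset.sum_const, nsmul_eq_mul, hKdef]
    field_simp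
  -- F3 : the decoding bound
  have hF3 : ∀ c, (fib c).Nonempty → ∑ s ∈ S.attach, r s c ≤ 1 := by
    rintro c ⟨y, hyc⟩
    set Bf : {s // s ∈ S} → Finset ι :=
      (fun s => Finset.univ.filter (fun g => c s g = true)) with hBfdef
    have hmB : ∀ s, m c s = (Bf s).card := fun s => rfl
    set w : Finset ι → ℝ := (fun B => α ^ B.card * (1-α) ^ (n - B.card) * (a ^ B.card)⁻¹)
      with hwdef
    have hw0 : ∀ B, 0 ≤ w B := by
      intro B
      have : (0:ℝ) < a := by linarith
      positivity
    have hgroup : ∑ s ∈ S.attach, r s c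
        = ∑ B ∈ (Finset.univ : Finset ι).powerset,
            ∑ s ∈ S.attach.filter (fun s => Bf s = B), r s c :=
      (Finset.sum_fiberwise_of_maps_to
        (fun s _ => Finset.mem_powerset.2 (Finset.subset_univ _)) _).symm
    have hinner : ∀ B ∈ (Finset.univ : Finset ι).powerset,
        ∑ s ∈ S.attach.filter (fun s => Bf s = B), r s c
          ≤ (A.card ^ B.card : ℕ) * w B := by
      intro B _
      have hconst : ∀ s ∈ S.attach.filter (fun s => Bf s = B), r s c = w B := by
        intro s hsB
        rw [hrdef, hwdef]
        simp only
        rw [hmB s, (Finset.mem_filter.1 hsB).2]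
      rw [Finset.sum_congr rfl hconst, Finset.sum_const, nsmul_eq_mul]
      apply mul_le_mul_of_nonneg_right _ (hw0 B)
      have hcard : (S.attach.filter (fun s => Bf s = B)).card ≤ A.card ^ B.card := by
        have := Finset.card_le_card_of_injOn
          (f := fun (s : {s // s ∈ S}) (g : ι) => if g ∈ B then s.1 g else y g)
          (t := Fintype.piFinset (fun g => if g ∈ B then A else {y g}))
          ?_ ?_ (s := S.attach.filter (fun s => Bf s = B))
        · refine le_trans this (le_of_eq ?_)
          rw [Fintype.card_piFinset]
          have : ∀ g, (if g ∈ B then A else ({y g} : Finset 𝒳)).card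
              = (if g ∈ B then A.card else 1) := by
            intro g; by_cases h : g ∈ B <;> simp [h]
          rw [Finset.prod_congr rfl (fun g _ => this g), Finset.prod_ite_mem,
            Finset.univ_inter, Finset.prod_const]
        · intro s _
          rw [Finset.mem_coe, Fintype.mem_piFinset]
          intro g
          by_cases h : g ∈ B
          · simp only [h, if_pos]
            exact hSA s.1 s.2 g
          · simp [h]
        · intro s hs t' ht' he
          simp only [Finset.coe_filter, Set.mem_setOf_eq] at hs ht'
          by_contra hne
          have hne1 : s.1 ≠ t'.1 := fun h => hne (Subtype.ext h)
          obtain ⟨g, hg⟩ := hsep s.1 s.2 t'.1 t'.2 hne1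
          by_cases hgB : g ∈ B
          · have h1 := congrFun he g
            simp only [hgB, if_pos] at h1
            rw [h1] at hg
            simp at hg
            linarith
          · have hs2 : g ∉ Bf s := hs.2 ▸ hgB
            have ht2 : g ∉ Bf t' := ht'.2 ▸ hgB
            rw [hBfdef] at hs2 ht2
            simp only [Finset.mem_filter, Finset.mem_univ, true_and] at hs2 ht2
            have hd1 : dist (s.1 g) (y g) < ε := by
              have := (hydist y c hyc s g).not
              rw [← not_le]
              intro hcon
              exact hs2 ((hydist y c hyc s g).2 hcon)
            have hd2 : dist (t'.1 g) (y g) < ε := by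
              rw [← not_le]
              intro hcon
              exact ht2 ((hydist y c hyc t' g).2 hcon)
            have htri := dist_triangle (s.1 g) (y g) (t'.1 g)
            rw [dist_comm (y g) (t'.1 g)] at htri
            linarith
      exact_mod_cast hcard
    have hfinal : ∑ B ∈ (Finset.univ : Finset ι).powerset, ((A.card ^ B.card : ℕ) : ℝ) * w B
        = 1 := by
      have hterm : ∀ B ∈ (Finset.univ : Finset ι).powerset,
          ((A.card ^ B.card : ℕ) : ℝ) * w B = α ^ B.card * (1-α) ^ (n - B.card) := by
        intro B _
        rw [hwdef]
        simp only
        push_cast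
        have ha' : (A.card : ℝ) ^ B.card ≠ 0 := by
          have : (0:ℝ) < a := by linarith
          rw [hadef] at this
          positivity
        have : ((A.card:ℝ) ^ B.card) * (α ^ B.card * (1-α) ^ (n - B.card) * (a ^ B.card)⁻¹)
            = α ^ B.card * (1-α) ^ (n - B.card) * ((A.card:ℝ) ^ B.card * (a ^ B.card)⁻¹) := by
          ring
        rw [this, hadef, mul_inv_cancel₀ ha', mul_one]
      rw [Finset.sum_congr rfl hterm]
      have := Finset.sum_pow_mul_eq_add_pow α (1-α) (Finset.univ : Finset ι)
      rw [Finset.card_univ] at this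
      rw [← hn] at this
      rw [this]
      norm_num
    calc ∑ s ∈ S.attach, r s c
        = ∑ B ∈ (Finset.univ : Finset ι).powerset,
            ∑ s ∈ S.attach.filter (fun s => Bf s = B), r s c := hgroup
      _ ≤ ∑ B ∈ (Finset.univ : Finset ι).powerset, ((A.card ^ B.card : ℕ) : ℝ) * w B :=
          Finset.sum_le_sum hinner
      _ = 1 := hfinal
  -- F6 : expected number of errors
  have hpoint : ∀ ω, (({g : ι | ε ≤ dist (X ω g) (Y ω g)} : Set ι).ncard : ℝ)
      = ∑ s ∈ S.attach, ∑ c, Set.indicator {ω' | X ω' = s.1 ∧ Y ω' ∈ fib c}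
          (fun _ => (m c s : ℝ)) ω := by
    intro ω
    set s₀ : {s // s ∈ S} := ⟨X ω, hXS ω⟩ with hs₀
    set c₀ := φ (Y ω) with hc₀
    rw [Finset.sum_eq_single_of_mem s₀ (S.mem_attach s₀)]
    · rw [Finset.sum_eq_single_of_mem c₀ (Finset.mem_univ c₀)]
      · have hωmem : ω ∈ {ω' | X ω' = s₀.1 ∧ Y ω' ∈ fib c₀} := ⟨rfl, rfl⟩
        rw [Set.indicator_of_mem hωmem]
        have h1 : {g : ι | ε ≤ dist (X ω g) (Y ω g)}
            = ↑(Finset.univ.filter fun g => c₀ s₀ g = true) := by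
          ext g
          simp only [Set.mem_setOf_eq, Finset.coe_filter, Finset.mem_univ, true_and,
            hc₀, hφ]
          simp [hs₀]
        rw [h1, Set.ncard_coe_finset]
      · intro c _ hne
        apply Set.indicator_of_notMem
        rintro ⟨_, h2⟩
        exact hne ((hyfib _ c).1 h2 ▸ rfl)
    · intro s _ hne
      apply Finset.sum_eq_zero
      intro c _
      apply Set.indicator_of_notMem
      rintro ⟨h1, _⟩
      exact hne (Subtype.ext h1.symm)
  have hF6 : ∑ s ∈ S.attach, ∑ c, (m c s : ℝ) * p s.1 c ≤ α * n := by
    have hint : ∫ ω, (({g : ι | ε ≤ dist (X ω g) (Y ω g)} : Set ι).ncard : ℝ) ∂P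
        = ∑ s ∈ S.attach, ∑ c, (m c s : ℝ) * p s.1 c := by
      rw [integral_congr_ae (Filter.Eventually.of_forall hpoint)]
      rw [integral_finset_sum _ (fun s _ => integrable_finset_sum _ (fun c _ =>
        (integrable_const ((m c s : ℝ))).indicator (hEmeas s.1 c)))]
      apply Finset.sum_congr rfl
      intro s _
      rw [integral_finset_sum _ (fun c _ =>
        (integrable_const ((m c s : ℝ))).indicator (hEmeas s.1 c))]
      apply Finset.sum_congr rfl
      intro c _
      rw [integral_indicator_const _ (hEmeas s.1 c), smul_eq_mul, mul_comm]
      rfl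
    rw [← hint]
    exact le_of_lt hdist
  -- Step A : expand miSum over the chosen partitions
  have hstepA : miSum P X Y Pp Qq
      = ∑ s ∈ S, ∑ c, p s c * Real.log (p s c / (1/K * q c)) := by
    unfold miSum
    rw [hPpdef, Finset.sum_insert hcompl_notmem]
    have hz : ∑ B ∈ Qq, (P {ω | X ω ∈ ((↑S : Set (ι → 𝒳)))ᶜ ∧ Y ω ∈ B}).toReal *
        Real.log ((P {ω | X ω ∈ ((↑S : Set (ι → 𝒳)))ᶜ ∧ Y ω ∈ B}).toReal /
          ((P {ω | X ω ∈ ((↑S : Set (ι → 𝒳)))ᶜ}).toReal * (P {ω | Y ω ∈ B}).toReal)) = 0 := by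
      apply Finset.sum_eq_zero
      intro B _
      have he : {ω | X ω ∈ ((↑S : Set (ι → 𝒳)))ᶜ ∧ Y ω ∈ B} = ∅ :=
        Set.eq_empty_iff_forall_notMem.2 (fun ω h => h.1 (Finset.mem_coe.2 (hXS ω)))
      rw [he]
      simp
    rw [hz, zero_add,
      Finset.sum_image (by intro x _ y _ h; exact Set.singleton_eq_singleton_iff.1 h)]
    apply Finset.sum_congr rfl
    intro s hs
    rw [hQqdef]
    rw [sum_image_fibers φ _ (by
      have he : {ω | X ω ∈ ({s} : Set (ι → 𝒳)) ∧ Y ω ∈ (∅ : Set (ι → 𝒳))} = ∅ := by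
        ext ω; simp
      rw [he]; simp)]
    apply Finset.sum_congr rfl
    intro c _
    have h1 : {ω | X ω ∈ ({s} : Set (ι → 𝒳)) ∧ Y ω ∈ fib c} = {ω | X ω = s ∧ Y ω ∈ fib c} := by
      ext ω; simp
    have h2 : {ω | X ω ∈ ({s} : Set (ι → 𝒳))} = {ω | X ω = s} := by ext ω; simp
    rw [h1, h2]
    have h3 : (P {ω | X ω = s}).toReal = 1/K := by rw [hKdef]; exact hunif s hs
    rw [h3]
  -- Step B : per-fiber Gibbs bound
  have hstepB : ∀ c, ∑ s ∈ S.attach, p s.1 c * (Real.log K + Real.log (r s c))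
      ≤ ∑ s ∈ S.attach, p s.1 c * Real.log (p s.1 c / (1/K * q c)) := by
    intro c
    have hsplit : ∀ s ∈ S.attach, p s.1 c * Real.log (p s.1 c / (1/K * q c))
        = p s.1 c * Real.log (p s.1 c / (q c * r s c))
          + p s.1 c * (Real.log K + Real.log (r s c)) := by
      intro s _
      rcases eq_or_lt_of_le (hp0 s.1 c) with h | h
      · rw [← h]; ring
      · have hqc : 0 < q c := lt_of_lt_of_le h (hpq s.1 c)
        have hrc := hr0 s c
        have hK0' : (0:ℝ) < 1/K := one_div_pos.2 hK0
        rw [Real.log_div (ne_of_gt h) (mul_ne_zero (ne_of_gt hK0') (ne_of_gt hqc)),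
            Real.log_div (ne_of_gt h) (mul_ne_zero (ne_of_gt hqc) (ne_of_gt hrc)),
            Real.log_mul (ne_of_gt hK0') (ne_of_gt hqc),
            Real.log_mul (ne_of_gt hqc) (ne_of_gt hrc), one_div, Real.log_inv]
        ring
    rw [Finset.sum_congr rfl hsplit, Finset.sum_add_distrib]
    have hgibbs : 0 ≤ ∑ s ∈ S.attach, p s.1 c * Real.log (p s.1 c / (q c * r s c)) := by
      have h1 := gibbs_sum S.attach (fun s => p s.1 c) (fun s => q c * r s c)
        (fun s _ => hp0 s.1 c) (fun s _ => mul_nonneg (hq0 c) (le_of_lt (hr0 s c)))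
        (fun s _ hne => mul_pos
          (lt_of_lt_of_le (lt_of_le_of_ne (hp0 s.1 c) (Ne.symm hne)) (hpq s.1 c)) (hr0 s c))
      have h2 : 0 ≤ ∑ s ∈ S.attach, (p s.1 c - q c * r s c) := by
        rw [Finset.sum_sub_distrib, ← Finset.mul_sum]
        have h3 : ∑ s ∈ S.attach, p s.1 c = q c := by
          rw [← hF4 c]
          exact Finset.sum_attach S (fun s => p s c)
        rw [h3]
        rcases Set.eq_empty_or_nonempty (fib c) with hfc | hfc
        · have hq' : q c = 0 := by
            have he : {ω | Y ω ∈ fib c} = (∅ : Set Ω) := by rw [hfc]; ext ω; simp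
            show (P {ω | Y ω ∈ fib c}).toReal = 0
            rw [he]; simp
          rw [hq']; simp
        · have h4 := hF3 c hfc
          nlinarith [hq0 c]
      linarith
    exact le_add_of_nonneg_left hgibbs
  -- log of r
  have ha0' : (0:ℝ) < a := by linarith
  have hlogr : ∀ s c, Real.log (r s c) = (m c s : ℝ) * Real.log α
      + ((n:ℝ) - (m c s : ℝ)) * Real.log (1-α) - (m c s : ℝ) * Real.log a := by
    intro s c
    rw [hrdef]
    simp only
    rw [Real.log_mul (mul_ne_zero (pow_ne_zero _ (ne_of_gt hα0))
        (pow_ne_zero _ (ne_of_gt h1α))) (inv_ne_zero (pow_ne_zero _ (ne_of_gt ha0'))),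
      Real.log_mul (pow_ne_zero _ (ne_of_gt hα0)) (pow_ne_zero _ (ne_of_gt h1α)),
      Real.log_inv, Real.log_pow, Real.log_pow, Real.log_pow,
      Nat.cast_sub (hmn c s)]
    ring
  set L : ℝ := Real.log α - Real.log (1-α) - Real.log a with hLdef
  have hL0 : L ≤ 0 := by
    have h1 : Real.log α ≤ Real.log (1-α) := Real.log_le_log hα0 (by linarith)
    have h2 : 0 ≤ Real.log a := Real.log_nonneg ha0
    rw [hLdef]; linarith
  have hterm2 : ∀ (s : {s // s ∈ S}) c, p s.1 c * (Real.log K + Real.log (r s c))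
      = (Real.log K + (n:ℝ) * Real.log (1-α)) * p s.1 c
        + L * ((m c s : ℝ) * p s.1 c) := by
    intro s c
    rw [hlogr, hLdef]
    ring
  have hp1 : ∑ s ∈ S.attach, ∑ c, p s.1 c = 1 := by
    rw [Finset.sum_attach S (fun s => ∑ c, p s c)]
    exact hsumsum
  have hchain2 : ∑ s ∈ S.attach, ∑ c, p s.1 c * (Real.log K + Real.log (r s c))
      = (Real.log K + (n:ℝ) * Real.log (1-α))
        + L * (∑ s ∈ S.attach, ∑ c, (m c s : ℝ) * p s.1 c) := by
    calc ∑ s ∈ S.attach, ∑ c, p s.1 c * (Real.log K + Real.log (r s c))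
        = ∑ s ∈ S.attach, ∑ c, ((Real.log K + (n:ℝ) * Real.log (1-α)) * p s.1 c
            + L * ((m c s : ℝ) * p s.1 c)) :=
          Finset.sum_congr rfl (fun s _ => Finset.sum_congr rfl (fun c _ => hterm2 s c))
      _ = (Real.log K + (n:ℝ) * Real.log (1-α)) * (∑ s ∈ S.attach, ∑ c, p s.1 c)
            + L * (∑ s ∈ S.attach, ∑ c, (m c s : ℝ) * p s.1 c) := by
          simp only [Finset.sum_add_distrib, Finset.mul_sum]
      _ = (Real.log K + (n:ℝ) * Real.log (1-α))
            + L * (∑ s ∈ S.attach, ∑ c, (m c s : ℝ) * p s.1 c) := by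
          rw [hp1, mul_one]
  have hchain1 : ∑ s ∈ S.attach, ∑ c, p s.1 c * (Real.log K + Real.log (r s c))
      ≤ miSum P X Y Pp Qq := by
    rw [hstepA, ← Finset.sum_attach S (fun s => ∑ c, p s c * Real.log (p s c / (1/K * q c)))]
    rw [Finset.sum_comm (s := S.attach), Finset.sum_comm (s := S.attach)]
    exact Finset.sum_le_sum (fun c _ => hstepB c)
  have hLM : L * (α * (n:ℝ)) ≤ L * (∑ s ∈ S.attach, ∑ c, (m c s : ℝ) * p s.1 c) :=
    mul_le_mul_of_nonpos_left hF6 hL0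
  -- put everything together
  have hbdd : BddAbove (Set.range fun pq :
      {pq : Finset (Set (ι → 𝒳)) × Finset (Set (ι → 𝒳)) //
        IsFinPartition pq.1 ∧ IsFinPartition pq.2} => miSum P X Y pq.1.1 pq.1.2) := by
    refine ⟨Real.log S.card, ?_⟩
    rintro x ⟨pq, rfl⟩
    exact miSum_le_log P X Y hX hY S hS hXS pq.1.1 pq.1.2 pq.2.1 pq.2.2
  have hle : miSum P X Y Pp Qq ≤ mutualInfo P X Y :=
    le_ciSup hbdd ⟨(Pp, Qq), hPpPart, hQqPart⟩
  have hfin : Real.log K + (n:ℝ) * Real.log (1-α) + L * (α * (n:ℝ))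
      = Real.log K - (n:ℝ) * binEnt α - α * (n:ℝ) * Real.log a := by
    rw [hLdef, binEnt]
    ring
  linarith
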